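/- Let λ ∈ ℂ with Re λ ≥ 0 and λ ≠ 0, and a > 0. Write −λ/a = r(cos θ + i sin θ) with r = |λ|/a > 0 and θ ∈ [π/2, 3π/2]. Set ā = cos(θ/4), b̄ = sin(θ/4), μ₁ = r^{1/4}(−b̄ + i ā), μ₂ = r^{1/4}(−ā − i b̄). Then the 2×2 complex matrix M = [[μ₁³, μ₂³],[μ₁, μ₂]] is invertible. -/

import Mathlib

open Real Complex

theorem stmt11 (lam : ℂ) (hre : 0 ≤ lam.re) (hlam : lam ≠ 0) (a : ℝ) (ha : 0 < a)
    (r θ : ℝ) (hr : r = ‖lam‖ / a) (hθ : θ ∈ Set.Icc (π / 2) (3 * π / 2))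
    (hpolar : -lam / (a : ℂ) = (r : ℂ) * (Real.cos θ + Real.sin θ * Complex.I))
    (abar bbar : ℝ) (habar : abar = Real.cos (θ / 4)) (hbbar : bbar = Real.sin (θ / 4))
    (μ₁ μ₂ : ℂ)
    (hμ₁ : μ₁ = ((r ^ ((1:ℝ)/4) : ℝ) : ℂ) * (-(bbar : ℂ) + (abar : ℂ) * Complex.I))
    (hμ₂ : μ₂ = ((r ^ ((1:ℝ)/4) : ℝ) : ℂ) * (-(abar : ℂ) - (bbar : ℂ) * Complex.I))
    (M : Matrix (Fin 2) (Fin 2) ℂ) (hM : M = !![μ₁ ^ 3, μ₂ ^ 3; μ₁, μ₂]) :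
    IsUnit M := by
  have hπ := Real.pi_pos
  have hrpos : 0 < r := by
    rw [hr]
    exact div_pos (norm_pos_iff.mpr hlam) ha
  set s : ℝ := r ^ ((1:ℝ)/4) with hs
  have hspos : 0 < s := Real.rpow_pos_of_pos hrpos _
  have hθ4 : θ / 4 ∈ Set.Icc (π / 8) (3 * π / 8) := by
    constructor <;> [linarith [hθ.1]; linarith [hθ.2]]
  have habarpos : 0 < abar := by
    rw [habar]
    apply Real.cos_pos_of_mem_Ioo
    constructor <;> [linarith [hθ4.1]; linarith [hθ4.2]]
  have hbbarpos : 0 < bbar := by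
    rw [hbbar]
    apply Real.sin_pos_of_pos_of_lt_pi
    · linarith [hθ4.1]
    · linarith [hθ4.2]
  have hsC : ((s : ℂ)) ≠ 0 := by
    exact_mod_cast hspos.ne'
  have h1 : μ₁ ≠ 0 := by
    rw [hμ₁]
    apply mul_ne_zero hsC
    intro h
    have := congrArg Complex.im h
    simp at this
    linarith
  have h2 : μ₂ ≠ 0 := by
    rw [hμ₂]
    apply mul_ne_zero hsC
    intro h
    have := congrArg Complex.re h
    simp at this
    linarith
  have h3 : μ₁ - μ₂ ≠ 0 := by
    rw [hμ₁, hμ₂]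
    intro h
    have := congrArg Complex.im h
    simp at this
    nlinarith [mul_pos hspos habarpos, mul_pos hspos hbbarpos]
  have h4 : μ₁ + μ₂ ≠ 0 := by
    rw [hμ₁, hμ₂]
    intro h
    have := congrArg Complex.re h
    simp at this
    nlinarith [mul_pos hspos habarpos, mul_pos hspos hbbarpos]
  rw [Matrix.isUnit_iff_isUnit_det, hM, Matrix.det_fin_two_of, isUnit_iff_ne_zero]
  have : μ₁ ^ 3 * μ₂ - μ₂ ^ 3 * μ₁ = μ₁ * μ₂ * ((μ₁ - μ₂) * (μ₁ + μ₂)) := by ring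
  rw [this]
  exact mul_ne_zero (mul_ne_zero h1 h2) (mul_ne_zero h3 h4)
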